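/- Let G = A*_C φ be an HNN extension with generating set S = {t, t⁻¹} ∪ A \ {1}. Let w = t^{n₁} a₁ t^{n₂} a₂ ⋯ t^{n_I} a_I with aᵢ ∈ A\{1}, nᵢ ≠ 0, satisfying: n₁, n₃, … > 0; n₂, n₄, … < 0; a₁, a₃, … ∉ C; a₂, a₄, … ∉ φ(C). Then w is a geodesic word: the word length of the element it represents equals Σᵢ |nᵢ| + I. -/

import Mathlib

open HNNExtension

/-- The generating set `S = {t, t⁻¹} ∪ (A \ {1})` of the HNN extension. -/
def hnnGenSet {H : Type*} [Group H] (C C' : Subgroup H) (φ : C ≃* C') :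
    Set (HNNExtension H C C' φ) :=
  {HNNExtension.t, HNNExtension.t⁻¹} ∪ (HNNExtension.of '' {x : H | x ≠ 1})

/-- Word length of `g` with respect to the generating set `S = {t, t⁻¹} ∪ (A \ {1})`. -/
noncomputable def hnnWordLength {H : Type*} [Group H] (C C' : Subgroup H) (φ : C ≃* C')
    (g : HNNExtension H C C' φ) : ℕ :=
  sInf {k | ∃ l : List (HNNExtension H C C' φ),
    (∀ x ∈ l, x ∈ hnnGenSet C C' φ) ∧ l.prod = g ∧ l.length = k}

open HNNExtension.NormalWord List


namespace AWG

open scoped Classical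

variable {G : Type*} [Group G] (A B : Subgroup G) (φ : A ≃* B)

/-- The chain relation of reduced words. -/
abbrev Rrel : (ℤˣ × G) → (ℤˣ × G) → Prop :=
  fun a b => a.2 ∈ toSubgroup A B a.1 → a.1 = b.1

/-- cost of a list of letters -/
noncomputable def costL : List (ℤˣ × G) → ℕ
  | [] => 0
  | (_, g) :: l => (if g = 1 then 1 else 2) + costL l

lemma costL_append (p q : List (ℤˣ × G)) : costL (p ++ q) = costL p + costL q := by
  induction p with
  | nil => simp [costL]
  | cons x l ih => cases x; simp [costL, ih]; ring

lemma length_le_costL (p : List (ℤˣ × G)) : p.length ≤ costL p := by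
  induction p with
  | nil => simp [costL]
  | cons x l ih =>
    cases x; simp only [costL, List.length_cons]
    split <;> omega

lemma costL_cons_le (u : ℤˣ) (g : G) (l : List (ℤˣ × G)) :
    costL ((u, g) :: l) ≤ 2 + costL l := by
  simp only [costL]; split <;> omega

lemma succ_length_le_costL (p : List (ℤˣ × G)) (x : ℤˣ × G) (hx : x ∈ p) (hx1 : x.2 ≠ 1) :
    p.length + 1 ≤ costL p := by
  induction p with
  | nil => simp at hx
  | cons y l ih =>
    rw [List.mem_cons] at hx
    rcases hx with h | h
    · subst h
      rcases x with ⟨u, g⟩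
      simp only [costL, List.length_cons]
      rw [if_neg (by simpa using hx1)]
      have := length_le_costL (G := G) l
      omega
    · rcases y with ⟨u, g⟩
      have := ih h
      simp only [costL, List.length_cons]
      split <;> omega

/-- blocks `(u, m, a)` represent `t^(u*(m+1)) * a`. -/
noncomputable def canonList : List (ℤˣ × ℕ × G) → List (ℤˣ × G)
  | [] => []
  | (u, m, a) :: bs => List.replicate m (u, 1) ++ (u, a) :: canonList bs

lemma map_fst_canonList_cons (u : ℤˣ) (m : ℕ) (a : G) (bs : List (ℤˣ × ℕ × G)) :
    (canonList ((u, m, a) :: bs)).map Prod.fst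
      = List.replicate (m + 1) u ++ (canonList bs).map Prod.fst := by
  simp [canonList, List.replicate_succ' (n := m), List.map_replicate]

lemma costL_canonList_cons (u : ℤˣ) (m : ℕ) (a : G) (bs : List (ℤˣ × ℕ × G)) :
    (canonList ((u, m, a) :: bs)).length = m + 1 + (canonList bs).length := by
  simp [canonList]; omega

lemma canonList_ne_nil (b : ℤˣ × ℕ × G) (bs : List (ℤˣ × ℕ × G)) :
    canonList (b :: bs) ≠ [] := by
  rcases b with ⟨u, m, a⟩; simp [canonList]

lemma canonList_getLast? (bs : List (ℤˣ × ℕ × G)) :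
    (canonList bs).getLast? = bs.getLast?.map (fun b => (b.1, b.2.2)) := by
  induction bs with
  | nil => simp [canonList]
  | cons b bs ih =>
    rcases b with ⟨u, m, a⟩
    rcases bs with _ | ⟨b', bs'⟩
    · simp [canonList, List.getLast?_append]
    · rw [canonList, List.getLast?_append_of_ne_nil _ (by simp),
        show ((u, a) :: canonList (b' :: bs')) = [(u, a)] ++ canonList (b' :: bs') from rfl,
        List.getLast?_append_of_ne_nil _ (canonList_ne_nil _ _), ih]
      simp


lemma chain_canonList (bs : List (ℤˣ × ℕ × G))
    (hmem : ∀ b ∈ bs, b.2.2 ∉ toSubgroup A B b.1) :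
    (canonList bs).IsChain (Rrel A B) := by
  induction bs with
  | nil => simp [canonList]
  | cons b bs ih =>
    rcases b with ⟨u, m, a⟩
    rw [canonList, List.isChain_append]
    refine ⟨List.isChain_replicate_of_rel _ (fun _ => rfl), ?_, ?_⟩
    · rw [List.isChain_cons]
      refine ⟨?_, ih (fun b hb => hmem b (List.mem_cons_of_mem _ hb))⟩
      intro y _ hmem'
      exact absurd hmem' (hmem _ (List.mem_cons_self))
    · intro x hx y hy
      have hx' : x = (u, 1) := List.eq_of_mem_replicate (List.mem_of_mem_getLast? hx)
      rw [List.head?_cons, Option.mem_some_iff] at hy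
      subst hx'; subst hy
      intro _; rfl

/-- the letter function -/
noncomputable def letter : ℤˣ × G → HNNExtension G A B φ :=
  fun x => t ^ (x.1 : ℤ) * of x.2

lemma prod_canonList (bs : List (ℤˣ × ℕ × G)) :
    ((canonList bs).map (letter A B φ)).prod
      = (bs.map (fun b => t ^ ((b.1 : ℤ) * (b.2.1 + 1)) * of b.2.2)).prod := by
  induction bs with
  | nil => simp [canonList]
  | cons b bs ih =>
    rcases b with ⟨u, m, a⟩
    rw [canonList]
    simp only [List.map_append, List.map_cons, List.prod_append, List.prod_cons, ih,
      List.map_replicate, List.prod_replicate]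
    have h1 : letter A B φ (u, (1 : G)) = t ^ (u : ℤ) := by
      simp [letter]
    have h2 : letter A B φ (u, a) = t ^ (u : ℤ) * of a := rfl
    rw [h1, h2, ← zpow_natCast (t ^ (u : ℤ)) m, ← zpow_mul, ← mul_assoc, ← mul_assoc,
      ← zpow_add]
    ring_nf

lemma count_ge (bs : List (ℤˣ × ℕ × G)) (haltb : bs.IsChain (fun b c => b.1 ≠ c.1)) :
    ∀ p : List (ℤˣ × G), p.IsChain (Rrel A B) →
      p.map Prod.fst = (canonList bs).map Prod.fst →
      (∀ h : p ≠ [], (p.getLast h).2 ≠ 1) →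
      p.length + bs.length ≤ costL p := by
  induction bs with
  | nil => intro p _ _ _; simpa using length_le_costL p
  | cons b bs ih =>
    rcases b with ⟨u, m, a⟩
    intro p hchain hmap hlast
    rw [map_fst_canonList_cons] at hmap
    set q := p.take (m + 1) with hq
    set r := p.drop (m + 1) with hr
    have hpqr : p = q ++ r := (List.take_append_drop _ _).symm
    have hmq : q.map Prod.fst = List.replicate (m + 1) u := by
      rw [hq, List.map_take, hmap]
      rw [List.take_append_of_le_length (by simp)]
      simp
    have hmr : r.map Prod.fst = (canonList bs).map Prod.fst := by
      rw [hr, List.map_drop, hmap]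
      rw [List.drop_append_of_le_length (by simp)]
      simp
    have hqne : q ≠ [] := by
      intro h
      rw [h] at hmq
      simp at hmq
    rcases bs with _ | ⟨b', bs'⟩
    · -- r = []
      have hrnil : r = [] := by
        have := hmr
        simp [canonList] at this
        exact this
      have hpq : p = q := by rw [hpqr, hrnil, List.append_nil]
      have hpne : p ≠ [] := hpq ▸ hqne
      have := succ_length_le_costL p _ (List.getLast_mem hpne) (hlast hpne)
      simpa using this
    · -- r ≠ []
      obtain ⟨u', m', a'⟩ := b'
      have hrne : r ≠ [] := by
        intro h
        rw [h] at hmr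
        exact (canonList_ne_nil (u', m', a') bs') (by simpa using hmr.symm)
      have hchains := hpqr ▸ hchain
      rw [List.isChain_append] at hchains
      obtain ⟨hcq, hcr, hjun⟩ := hchains
      have hql : (q.getLast hqne).1 = u := by
        have : (q.getLast hqne).1 ∈ q.map Prod.fst := List.mem_map_of_mem (List.getLast_mem hqne)
        rw [hmq] at this
        exact List.eq_of_mem_replicate this
      have hrh : (r.head hrne).1 = u' := by
        have h1 : (r.map Prod.fst).head? = some (r.head hrne).1 := by
          rw [List.head?_map, List.head?_eq_head hrne]; rfl
        rw [hmr, map_fst_canonList_cons, List.head?_append_of_ne_nil _ (by simp),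
          List.replicate_succ, List.head?_cons] at h1
        exact (Option.some.inj h1).symm
      have hune : u ≠ u' := (List.isChain_cons.1 haltb).1 (u', m', a') (by simp)
      have hqlast : (q.getLast hqne).2 ≠ 1 := by
        intro h1
        have hR : Rrel A B (q.getLast hqne) (r.head hrne) := by
          apply hjun
          · rw [List.getLast?_eq_getLast hqne]; simp
          · rw [List.head?_eq_head hrne]; simp
        have := hR (by rw [h1]; exact one_mem _)
        rw [hql, hrh] at this
        exact hune this
      have hcost : costL p = costL q + costL r := by rw [hpqr, costL_append]
      have hlq : q.length = m + 1 := by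
        have := congrArg List.length hmq
        simpa using this
      have h1 : q.length + 1 ≤ costL q :=
        succ_length_le_costL q _ (List.getLast_mem hqne) hqlast
      have hrlast : ∀ h : r ≠ [], (r.getLast h).2 ≠ 1 := by
        intro h
        have hp : p ≠ [] := by rw [hpqr]; simp [hrne]
        have e : some (p.getLast hp) = some (r.getLast h) := by
          rw [← List.getLast?_eq_getLast hp, ← List.getLast?_eq_getLast h, hpqr,
            List.getLast?_append_of_ne_nil _ hrne]
        rw [← Option.some.inj e]
        exact hlast hp
      have h2 : r.length + ((u', m', a') :: bs').length ≤ costL r :=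
        ih ((List.isChain_cons.1 haltb).2) r hcr hmr hrlast
      have hlp : p.length = q.length + r.length := by rw [hpqr]; simp
      simp only [List.length_cons] at h2 ⊢
      omega

variable {A B}

lemma t_zpow_mul_of (u : ℤˣ) (g : G) (hg : g ∈ toSubgroup A B u) :
    (t ^ (u : ℤ) : HNNExtension G A B φ) * of g
      = of ((toSubgroupEquiv φ u ⟨g, hg⟩ : G)) * t ^ (u : ℤ) := by
  rcases Int.units_eq_one_or u with rfl | rfl
  · have h := t_mul_of (φ := φ) ⟨g, hg⟩; simp only [Units.val_one, zpow_one]; exact h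
  · have h := inv_t_mul_of (φ := φ) ⟨g, hg⟩
    simp only [Units.val_neg, Units.val_one, zpow_neg, zpow_one]; exact h

/-- cost of a reduced word -/
noncomputable def cost (w : ReducedWord G A B) : ℕ :=
  (if w.head = 1 then 0 else 1) + costL w.toList

lemma prod_mk (hd : G) (L : List (ℤˣ × G)) (hch) :
    (ReducedWord.mk hd L hch).prod φ = of hd * (L.map (letter A B φ)).prod := rfl

lemma units_cases (u u' : ℤˣ) : u' = u ∨ u' = -u := by
  rcases Int.units_eq_one_or u with rfl | rfl <;>
    rcases Int.units_eq_one_or u' with rfl | rfl <;> simp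

lemma t_zpow_mul_t_zpow_neg (u : ℤˣ) :
    (t ^ (u : ℤ) : HNNExtension G A B φ) * t ^ (((-u : ℤˣ)) : ℤ) = 1 := by
  have : (((-u : ℤˣ)) : ℤ) = -(u : ℤ) := by simp
  rw [this, zpow_neg, mul_inv_cancel]

lemma step_t (u : ℤˣ) (w : ReducedWord G A B) :
    ∃ w' : ReducedWord G A B, w'.prod φ = t ^ (u : ℤ) * w.prod φ ∧ cost w' ≤ cost w + 1 := by
  rcases w with ⟨hd, L, hch⟩
  by_cases hcan : hd ∈ toSubgroup A B u ∧ ∃ g' rest, L = (-u, g') :: rest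
  · obtain ⟨hmem, g', rest, rfl⟩ := hcan
    refine ⟨⟨(toSubgroupEquiv φ u ⟨hd, hmem⟩ : G) * g', rest,
      (List.isChain_cons.1 hch).2⟩, ?_, ?_⟩
    · rw [prod_mk, prod_mk, List.map_cons, List.prod_cons]
      simp only [letter, ← mul_assoc, map_mul]
      rw [t_zpow_mul_of φ u hd hmem, mul_assoc (of _) (t ^ (u : ℤ)),
        t_zpow_mul_t_zpow_neg, mul_one]
    · simp only [cost, costL]
      split_ifs <;> omega
  · refine ⟨⟨1, (u, hd) :: L, ?_⟩, ?_, ?_⟩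
    · rw [List.isChain_cons]
      refine ⟨?_, hch⟩
      intro y hy hmem
      rcases L with _ | ⟨⟨u'', g''⟩, rest⟩
      · simp at hy
      · rw [List.head?_cons, Option.mem_some_iff] at hy
        subst hy
        rcases units_cases u u'' with h | h
        · exact h.symm
        · exact absurd ⟨hmem, g'', rest, by rw [h]⟩ hcan
    · rw [prod_mk, prod_mk, List.map_cons, List.prod_cons]
      simp [letter, mul_assoc]
    · simp only [cost, costL]
      split_ifs <;> omega

lemma step_of (g : G) (w : ReducedWord G A B) :
    ∃ w' : ReducedWord G A B, w'.prod φ = of g * w.prod φ ∧ cost w' ≤ cost w + 1 := by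
  rcases w with ⟨hd, L, hch⟩
  refine ⟨⟨g * hd, L, hch⟩, ?_, ?_⟩
  · rw [prod_mk, prod_mk, map_mul, mul_assoc]
  · simp only [cost]
    split_ifs <;> omega

lemma machine : ∀ l : List (HNNExtension G A B φ),
    (∀ x ∈ l, (∃ u : ℤˣ, x = t ^ (u : ℤ)) ∨ ∃ g : G, x = of g) →
    ∃ w : ReducedWord G A B, w.prod φ = l.prod ∧ cost w ≤ l.length := by
  intro l
  induction l with
  | nil =>
    intro _
    refine ⟨ReducedWord.empty G A B, ?_, ?_⟩
    · rw [prod_mk]; simp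
    · simp [cost, costL, ReducedWord.empty]
  | cons x l ih =>
    intro hx
    obtain ⟨w, hw1, hw2⟩ := ih (fun y hy => hx y (List.mem_cons_of_mem _ hy))
    rcases hx x (List.mem_cons_self) with ⟨u, rfl⟩ | ⟨g, rfl⟩
    · obtain ⟨w', h1, h2⟩ := step_t φ u w
      refine ⟨w', by rw [h1, hw1, List.prod_cons], ?_⟩
      simp only [List.length_cons]
      omega
    · obtain ⟨w', h1, h2⟩ := step_of φ g w
      refine ⟨w', by rw [h1, hw1, List.prod_cons], ?_⟩
      simp only [List.length_cons]
      omega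

lemma canonList_length (bs : List (ℤˣ × ℕ × G)) :
    (canonList bs).length = (bs.map (fun b => b.2.1 + 1)).sum := by
  induction bs with
  | nil => simp [canonList]
  | cons b bs ih =>
    rcases b with ⟨u, m, a⟩
    rw [costL_canonList_cons, ih]
    simp [add_comm, add_left_comm]

lemma prod_eq (w : ReducedWord G A B) :
    w.prod φ = of w.head * ((w.toList).map (letter A B φ)).prod := rfl

end AWG



/-- In the HNN extension `G = H*_C φ` (relation `t c t⁻¹ = φ c`, `C' = φ(C)`) with
`|H/C| ≥ 2` and `|H/C'| ≥ 2`, a word `w = t^{n₁} a₁ t^{n₂} a₂ ⋯ t^{n_I} a_I` with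
`aᵢ ∈ H \ {1}`, `n₁, n₃, … > 0`, `n₂, n₄, … < 0`, `a₁, a₃, … ∉ C` and
`a₂, a₄, … ∉ C' = φ(C)` is geodesic: the word length of the element it represents
equals `Σᵢ |nᵢ| + I`. -/
theorem alternating_word_is_geodesic {H : Type*} [Group H]
    (C C' : Subgroup H) (φ : C ≃* C')
    (hC : ∃ x : H, x ∉ C) (hC' : ∃ y : H, y ∉ C')
    (I : ℕ) (n : Fin I → ℤ) (a : Fin I → H) (ha : ∀ i, a i ≠ 1)
    (halt : ∀ i : Fin I,
      (Even (i : ℕ) → 0 < n i ∧ a i ∉ C) ∧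
      (Odd (i : ℕ) → n i < 0 ∧ a i ∉ C')) :
    hnnWordLength C C' φ
        (((List.finRange I).map
          (fun i => HNNExtension.t ^ (n i) * HNNExtension.of (a i))).prod) =
      (∑ i : Fin I, (n i).natAbs) + I := by
  classical
  set u : Fin I → ℤˣ := fun i => if Even (i : ℕ) then 1 else -1 with hu
  have hnne : ∀ i, 1 ≤ (n i).natAbs := by
    intro i
    rcases Nat.even_or_odd (i : ℕ) with h | h
    · have := ((halt i).1 h).1; omega
    · have := ((halt i).2 h).1; omega
  have hval : ∀ i, (u i : ℤ) * ((n i).natAbs : ℤ) = n i := by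
    intro i
    rcases Nat.even_or_odd (i : ℕ) with h | h
    · have h1 := ((halt i).1 h).1
      have h2 : ((n i).natAbs : ℤ) = n i := Int.natAbs_of_nonneg h1.le
      simp only [hu, if_pos h, Units.val_one, one_mul, h2]
    · have h1 := ((halt i).2 h).1
      have h2 : ((n i).natAbs : ℤ) = -(n i) := by omega
      simp only [hu, if_neg (Nat.not_even_iff_odd.2 h), h2, Units.val_neg, Units.val_one]
      ring
  set bs : List (ℤˣ × ℕ × H) :=
    (List.finRange I).map (fun i => (u i, (n i).natAbs - 1, a i)) with hbs
  have hmemb : ∀ b ∈ bs, b.2.2 ∉ toSubgroup C C' b.1 := by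
    intro b hb
    rw [hbs, List.mem_map] at hb
    obtain ⟨i, -, rfl⟩ := hb
    dsimp only
    rcases Nat.even_or_odd (i : ℕ) with h | h
    · simp only [hu, if_pos h, toSubgroup_one]
      exact ((halt i).1 h).2
    · simp only [hu, if_neg (Nat.not_even_iff_odd.2 h), toSubgroup_neg_one]
      exact ((halt i).2 h).2
  have haltb : bs.IsChain (fun b c => b.1 ≠ c.1) := by
    rw [hbs, List.isChain_map, List.isChain_iff_getElem]
    intro k hk
    rw [List.getElem_finRange, List.getElem_finRange]
    show u ⟨k, _⟩ ≠ u ⟨k + 1, _⟩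
    rw [hu]
    show (if Even ((⟨k, _⟩ : Fin I) : ℕ) then (1 : ℤˣ) else -1)
        ≠ (if Even ((⟨k + 1, _⟩ : Fin I) : ℕ) then (1 : ℤˣ) else -1)
    rcases Nat.even_or_odd k with h | h
    · rw [if_pos (show Even ((⟨k, _⟩ : Fin I) : ℕ) from h),
        if_neg (show ¬ Even ((⟨k + 1, _⟩ : Fin I) : ℕ) by
          simpa [Nat.even_add_one] using h)]
      decide
    · rw [if_neg (show ¬ Even ((⟨k, _⟩ : Fin I) : ℕ) from Nat.not_even_iff_odd.2 h),
        if_pos (show Even ((⟨k + 1, _⟩ : Fin I) : ℕ) by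
          simpa [Nat.even_add_one] using h)]
      decide
  have hchaincanon := AWG.chain_canonList C C' bs hmemb
  set w₀ : ReducedWord H C C' := ⟨1, AWG.canonList bs, hchaincanon⟩ with hw₀
  have hw₀l : w₀.toList = AWG.canonList bs := rfl
  have hw₀prod : w₀.prod φ
      = ((List.finRange I).map (fun i => t ^ (n i) * of (a i))).prod := by
    rw [hw₀, AWG.prod_mk, map_one, one_mul, AWG.prod_canonList, hbs, List.map_map]
    congr 1
    apply List.map_congr_left
    intro i _
    dsimp only [Function.comp]
    have h3 : ((((n i).natAbs - 1 : ℕ) : ℤ) + 1) = ((n i).natAbs : ℤ) := by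
      have := hnne i; omega
    rw [h3, hval]
  have hlenc : (AWG.canonList bs).length = ∑ i : Fin I, (n i).natAbs := by
    rw [AWG.canonList_length, hbs, List.map_map, Fin.sum_univ_def]
    congr 1
    apply List.map_congr_left
    intro i _
    dsimp only [Function.comp]
    have := hnne i
    omega
  have hbslen : bs.length = I := by rw [hbs]; simp
  -- the explicit geodesic word
  set glist : List (HNNExtension H C C' φ) :=
    (List.finRange I).flatMap
      (fun i => List.replicate (n i).natAbs (t ^ (u i : ℤ)) ++ [of (a i)]) with hgl
  have hglmem : ∀ x ∈ glist, x ∈ hnnGenSet C C' φ := by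
    intro x hx
    rw [hgl, List.mem_flatMap] at hx
    obtain ⟨i, -, hx⟩ := hx
    rw [List.mem_append] at hx
    rcases hx with hx | hx
    · have hx' := List.eq_of_mem_replicate hx
      subst hx'
      refine Or.inl ?_
      rcases Nat.even_or_odd (i : ℕ) with h | h
      · have : (t : HNNExtension H C C' φ) ^ ((u i : ℤˣ) : ℤ) = t := by
          simp [hu, if_pos h]
        rw [this]; exact Set.mem_insert _ _
      · have : (t : HNNExtension H C C' φ) ^ ((u i : ℤˣ) : ℤ) = t⁻¹ := by
          simp [hu, if_neg (Nat.not_even_iff_odd.2 h)]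
        rw [this]; exact Set.mem_insert_of_mem _ rfl
    · rw [List.mem_singleton] at hx
      subst hx
      exact Or.inr ⟨a i, ha i, rfl⟩
  have hglprod : glist.prod
      = ((List.finRange I).map (fun i => t ^ (n i) * of (a i))).prod := by
    rw [hgl, List.flatMap_def, List.prod_flatten, List.map_map]
    congr 1
    apply List.map_congr_left
    intro i _
    dsimp only [Function.comp]
    rw [List.prod_append, List.prod_replicate, List.prod_singleton,
      ← zpow_natCast (t ^ ((u i : ℤˣ) : ℤ)), ← zpow_mul, hval]
  have hgllen : glist.length = (∑ i : Fin I, (n i).natAbs) + I := by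
    rw [hgl, List.length_flatMap]
    have h1 : ((List.finRange I).map
        (fun i => (List.replicate (n i).natAbs ((t : HNNExtension H C C' φ) ^ ((u i : ℤˣ) : ℤ))
          ++ [of (a i)]).length))
        = (List.finRange I).map (fun i => (n i).natAbs + 1) := by
      apply List.map_congr_left
      intro i _
      simp
    rw [h1, ← Fin.sum_univ_def, Finset.sum_add_distrib]
    simp
  have hmem : ((∑ i : Fin I, (n i).natAbs) + I) ∈
      {k | ∃ l : List (HNNExtension H C C' φ),
        (∀ x ∈ l, x ∈ hnnGenSet C C' φ) ∧
        l.prod = ((List.finRange I).map (fun i => t ^ (n i) * of (a i))).prod ∧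
        l.length = k} :=
    ⟨glist, hglmem, hglprod, hgllen⟩
  unfold hnnWordLength
  refine le_antisymm (Nat.sInf_le hmem) (le_csInf ⟨_, hmem⟩ ?_)
  rintro k ⟨l, hl1, hl2, rfl⟩
  rcases Nat.eq_zero_or_pos I with hI | hI
  · subst hI
    simp
  have hgen : ∀ x ∈ l, (∃ v : ℤˣ, x = t ^ (v : ℤ)) ∨ ∃ g : H, x = of g := by
    intro x hx
    rcases hl1 x hx with hx' | hx'
    · simp only [Set.mem_insert_iff, Set.mem_singleton_iff] at hx'
      rcases hx' with rfl | rfl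
      · exact Or.inl ⟨1, by simp⟩
      · exact Or.inl ⟨-1, by simp⟩
    · obtain ⟨g, -, rfl⟩ := hx'
      exact Or.inr ⟨g, rfl⟩
  obtain ⟨w, hwprod, hwcost⟩ := AWG.machine φ l hgen
  have hprodeq : w.prod φ = w₀.prod φ := by rw [hwprod, hl2, hw₀prod]
  have hfst := (HNNExtension.ReducedWord.map_fst_eq_and_of_prod_eq φ hprodeq).1
  have hfst' : w.toList.map Prod.fst = (AWG.canonList bs).map Prod.fst := by
    rw [hfst, hw₀l]
  have hbsne : bs ≠ [] := by
    intro h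
    rw [h] at hbslen
    simp at hbslen
    omega
  obtain ⟨b0, bs0, hbs0⟩ := List.exists_cons_of_ne_nil hbsne
  have hcne : AWG.canonList bs ≠ [] := by rw [hbs0]; exact AWG.canonList_ne_nil _ _
  have hlastne : ∀ h : w.toList ≠ [], (w.toList.getLast h).2 ≠ 1 := by
    intro h hbad
    set ul := (w.toList.getLast h).1 with hul
    have hgl2 : w.toList.getLast h = (ul, (1 : H)) := Prod.ext rfl hbad
    have hwl := (List.dropLast_concat_getLast h).symm
    rw [hgl2] at hwl
    have hch' : (w.toList.dropLast).IsChain (AWG.Rrel C C') := w.chain.dropLast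
    have hch0 : (AWG.canonList bs ++ [(-ul, (1 : H))]).IsChain (AWG.Rrel C C') := by
      rw [List.isChain_append]
      refine ⟨hchaincanon, List.isChain_singleton _, ?_⟩
      intro x hx y hy hmem'
      exfalso
      rw [AWG.canonList_getLast?] at hx
      rw [Option.mem_def, Option.map_eq_some_iff] at hx
      obtain ⟨b, hb1, rfl⟩ := hx
      exact hmemb b (List.mem_of_mem_getLast? hb1) hmem'
    have e1 : w.prod φ
        = (⟨w.head, w.toList.dropLast, hch'⟩ : ReducedWord H C C').prod φ * t ^ (ul : ℤ) := by
      rw [AWG.prod_eq φ w, AWG.prod_mk]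
      conv_lhs => rw [hwl]
      rw [List.map_append, List.prod_append]
      simp [AWG.letter, mul_assoc]
    have e2 : (⟨1, AWG.canonList bs ++ [(-ul, 1)], hch0⟩ : ReducedWord H C C').prod φ
        = w₀.prod φ * t ^ (((-ul : ℤˣ)) : ℤ) := by
      rw [AWG.prod_mk, hw₀, AWG.prod_mk, List.map_append, List.prod_append]
      simp [AWG.letter, mul_assoc]
    have e3 : (⟨w.head, w.toList.dropLast, hch'⟩ : ReducedWord H C C').prod φ
        = (⟨1, AWG.canonList bs ++ [(-ul, 1)], hch0⟩ : ReducedWord H C C').prod φ := by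
      rw [e2, ← hprodeq, e1]
      have h4 : (((-ul : ℤˣ)) : ℤ) = -(ul : ℤ) := by simp
      rw [h4, zpow_neg, mul_assoc, mul_inv_cancel, mul_one]
    have hfst2 := (HNNExtension.ReducedWord.map_fst_eq_and_of_prod_eq φ e3).1
    have hlen2 := congrArg List.length hfst2
    have hlen0 := congrArg List.length hfst'
    simp only [List.length_map, List.length_append, List.length_dropLast,
      List.length_singleton] at hlen2 hlen0
    omega
  have hcount := AWG.count_ge C C' bs haltb w.toList w.chain hfst' hlastne
  have hLlen : w.toList.length = (AWG.canonList bs).length := by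
    have := congrArg List.length hfst'
    simpa using this
  have hcostub : AWG.costL w.toList ≤ AWG.cost w := Nat.le_add_left _ _
  omega
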